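/- Let $M_0 \geq 2$ and $\delta_0 > 0$ be constants, and let $\{A_k\}_{k=1}^\infty$ be a sequence of nonnegative reals satisfying $A_1 \leq M_0\delta_0^2$ and $A_{k+1} \leq M_0\delta_0^{2^{k+1}} + M_0^k A_k^2$ for all $k \geq 1$. Then $A_k \leq M_0^{-(k+2)}(M_0^4\delta_0^2)^{2^{k-1}}$ for all $k \geq 1$. -/

import Mathlib

theorem stmt_0 (M₀ δ₀ : ℝ) (hM : 2 ≤ M₀) (hδ : 0 < δ₀)
    (A : ℕ → ℝ) (hA : ∀ k, 1 ≤ k → 0 ≤ A k)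
    (h1 : A 1 ≤ M₀ * δ₀ ^ 2)
    (hrec : ∀ k, 1 ≤ k → A (k + 1) ≤ M₀ * δ₀ ^ (2 ^ (k + 1)) + M₀ ^ k * (A k) ^ 2) :
    ∀ k, 1 ≤ k → A k ≤ M₀ ^ (-(k + 2 : ℤ)) * (M₀ ^ 4 * δ₀ ^ 2) ^ (2 ^ (k - 1)) := by
  have hM0 : (0:ℝ) < M₀ := lt_of_lt_of_le two_pos hM
  have hM1 : (1:ℝ) ≤ M₀ := le_trans one_le_two hM
  have hlt : ∀ k : ℕ, k < 2 ^ k := fun k => Nat.lt_two_pow_self (n := k)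
  have hle1 : ∀ k : ℕ, 1 ≤ k → k + 2 ≤ 4 * 2 ^ (k - 1) := by
    intro k hk
    have := hlt (k - 1)
    omega
  have main : ∀ k, 1 ≤ k → A k ≤ M₀ ^ (4 * 2 ^ (k - 1) - (k + 2)) * δ₀ ^ (2 ^ k) := by
    intro k hk
    induction k, hk using Nat.le_induction with
    | base => norm_num; exact h1
    | succ k hk ih =>
      have h2 : (2:ℕ) ^ k = 2 * 2 ^ (k - 1) := by
        rw [← pow_succ', Nat.sub_add_cancel hk]
      have hk2 := hle1 k hk
      have hk5 : k + 5 ≤ 4 * 2 ^ k := by have := hlt k; omega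
      have hAk := hA k hk
      have hsq : (A k) ^ 2 ≤ (M₀ ^ (4 * 2 ^ (k - 1) - (k + 2)) * δ₀ ^ (2 ^ k)) ^ 2 :=
        pow_le_pow_left₀ hAk ih 2
      have step1 : A (k + 1) ≤ M₀ * δ₀ ^ (2 ^ (k + 1)) +
          M₀ ^ k * (M₀ ^ (4 * 2 ^ (k - 1) - (k + 2)) * δ₀ ^ (2 ^ k)) ^ 2 := by
        refine le_trans (hrec k hk) ?_
        have := mul_le_mul_of_nonneg_left hsq (le_of_lt (pow_pos hM0 k))
        linarith
      have hexp : k + 2 * (4 * 2 ^ (k - 1) - (k + 2)) = 4 * 2 ^ k - (k + 4) := by omega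
      have heq : M₀ ^ k * (M₀ ^ (4 * 2 ^ (k - 1) - (k + 2)) * δ₀ ^ (2 ^ k)) ^ 2 =
          M₀ ^ (4 * 2 ^ k - (k + 4)) * δ₀ ^ (2 ^ (k + 1)) := by
        have e1 : k + (4 * 2 ^ (k - 1) - (k + 2)) * 2 = 4 * 2 ^ k - (k + 4) := by omega
        have e2 : 2 ^ k * 2 = 2 ^ (k + 1) := by omega
        rw [mul_pow, ← pow_mul, ← pow_mul, ← mul_assoc, ← pow_add, e1, e2]
      rw [heq] at step1
      have hpow : M₀ + M₀ ^ (4 * 2 ^ k - (k + 4)) ≤ M₀ ^ (4 * 2 ^ k - (k + 3)) := by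
        have e1 : 4 * 2 ^ k - (k + 3) = (4 * 2 ^ k - (k + 4)) + 1 := by omega
        have e2 : 1 ≤ 4 * 2 ^ k - (k + 4) := by omega
        have hMe : M₀ ≤ M₀ ^ (4 * 2 ^ k - (k + 4)) := by
          calc M₀ = M₀ ^ 1 := (pow_one M₀).symm
          _ ≤ M₀ ^ (4 * 2 ^ k - (k + 4)) := pow_le_pow_right₀ hM1 e2
        have hpos : (0:ℝ) ≤ M₀ ^ (4 * 2 ^ k - (k + 4)) := le_of_lt (pow_pos hM0 _)
        calc M₀ + M₀ ^ (4 * 2 ^ k - (k + 4))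
            ≤ M₀ ^ (4 * 2 ^ k - (k + 4)) + M₀ ^ (4 * 2 ^ k - (k + 4)) := by linarith
          _ = 2 * M₀ ^ (4 * 2 ^ k - (k + 4)) := by ring
          _ ≤ M₀ * M₀ ^ (4 * 2 ^ k - (k + 4)) := by nlinarith
          _ = M₀ ^ (4 * 2 ^ k - (k + 3)) := by rw [e1, pow_succ]; ring
      have hδpow : (0:ℝ) ≤ δ₀ ^ (2 ^ (k + 1)) := le_of_lt (pow_pos hδ _)
      have final : M₀ * δ₀ ^ (2 ^ (k + 1)) + M₀ ^ (4 * 2 ^ k - (k + 4)) * δ₀ ^ (2 ^ (k + 1))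
          ≤ M₀ ^ (4 * 2 ^ k - (k + 3)) * δ₀ ^ (2 ^ (k + 1)) := by
        have := mul_le_mul_of_nonneg_right hpow hδpow
        linarith [this]
      have egoal : (k + 1) - 1 = k := by omega
      rw [egoal]
      have : 4 * 2 ^ k - (k + 1 + 2) = 4 * 2 ^ k - (k + 3) := by omega
      rw [this]
      exact le_trans step1 final
  intro k hk
  have hne : M₀ ≠ 0 := hM0.ne'
  have h2 : (2:ℕ) ^ k = 2 * 2 ^ (k - 1) := by
    rw [← pow_succ', Nat.sub_add_cancel hk]
  have hconv : M₀ ^ (-(k + 2 : ℤ)) * (M₀ ^ 4 * δ₀ ^ 2) ^ (2 ^ (k - 1)) =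
      M₀ ^ (4 * 2 ^ (k - 1) - (k + 2)) * δ₀ ^ (2 ^ k) := by
    have e2 : 2 ^ (k - 1) * 2 = 2 ^ k := by omega
    rw [mul_pow, ← pow_mul, ← pow_mul, ← h2]
    rw [← zpow_natCast M₀ (4 * 2 ^ (k - 1)), ← zpow_natCast M₀ (4 * 2 ^ (k - 1) - (k + 2))]
    rw [← mul_assoc, ← zpow_add₀ hne]
    congr 2
    have h := hle1 k hk
    zify [h]
    ring
  rw [hconv]
  exact main k hk
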